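/- Let $p$ be an odd prime and $k \in \mathbb{F}_p$ such that $-k$ is not a quadratic residue modulo $p$. Then there exists $n \in \mathbb{F}_p$ such that the image of the matrix $M_n = \begin{pmatrix} n & -k \\ 1 & n \end{pmatrix}$ in $PGL(2, \mathbb{F}_p)$ has order exactly $p + 1$. -/

import Mathlib

open Polynomial

namespace PGLAux

variable {p : ℕ} [Fact p.Prime]

/-- scalar matrices are central in the unit group -/
lemma scalar_mem_center {R : Type*} [CommRing R] (u : (Matrix (Fin 2) (Fin 2) R)ˣ) (a : R)
    (h : (u : Matrix (Fin 2) (Fin 2) R) = a • 1) :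
    u ∈ Subgroup.center (Matrix (Fin 2) (Fin 2) R)ˣ := by
  rw [Subgroup.mem_center_iff]
  intro g
  apply Units.ext
  show (g : Matrix (Fin 2) (Fin 2) R) * u = (u : Matrix (Fin 2) (Fin 2) R) * g
  rw [h, mul_smul_comm, smul_mul_assoc, one_mul, mul_one]

/-- the transvection unit -/
def Tu (R : Type*) [CommRing R] : (Matrix (Fin 2) (Fin 2) R)ˣ where
  val := !![1, 1; 0, 1]
  inv := !![1, -1; 0, 1]
  val_inv := by
    ext i j
    fin_cases i <;> fin_cases j <;>
      simp [Matrix.mul_apply, Fin.sum_univ_two, Matrix.one_apply]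
  inv_val := by
    ext i j
    fin_cases i <;> fin_cases j <;>
      simp [Matrix.mul_apply, Fin.sum_univ_two, Matrix.one_apply]

/-- every element of a quadratic AdjoinRoot is `of a + of b * root` -/
lemma adjoinRoot_repr {q : (ZMod p)[X]} (hmonic : q.Monic) (hdeg : q.degree = 2)
    (z : AdjoinRoot q) :
    ∃ a b : ZMod p, z = AdjoinRoot.of q a + AdjoinRoot.of q b * AdjoinRoot.root q := by
  induction z using AdjoinRoot.induction_on with
  | ih r =>
    have hmk : AdjoinRoot.mk q r = AdjoinRoot.mk q (r %ₘ q) := by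
      rw [Polynomial.modByMonic_eq_sub_mul_div r q, map_sub, map_mul,
        AdjoinRoot.mk_self, zero_mul, sub_zero]
    have hlt : (r %ₘ q).degree < 2 := hdeg ▸ Polynomial.degree_modByMonic_lt r hmonic
    have hnat : (r %ₘ q).natDegree ≤ 1 := by
      by_cases h0 : r %ₘ q = 0
      · simp [h0]
      · exact Nat.lt_succ_iff.mp ((Polynomial.natDegree_lt_iff_degree_lt h0).2
          (by exact_mod_cast hlt))
    obtain ⟨a, b, hab⟩ := Polynomial.exists_eq_X_add_C_of_natDegree_le_one hnat
    refine ⟨b, a, ?_⟩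
    rw [hmk, hab]
    simp only [map_add, map_mul]
    rw [AdjoinRoot.mk_C, AdjoinRoot.mk_C, AdjoinRoot.mk_X]
    ring_nf

end PGLAux

open PGLAux

set_option maxHeartbeats 1000000 in
set_option synthInstance.maxHeartbeats 400000 in
/-- If -κ is not a quadratic residue mod p, some matrix M_n = [[n,-κ],[1,n]]
has order exactly p + 1 in PGL(2, 𝔽_p). -/
theorem exists_matrix_order_p_add_one (p : ℕ) [Fact p.Prime] (hodd : Odd p)
    (κ : ZMod p) (hres : ¬ ∃ x : ZMod p, x ^ 2 = -κ) :
    ∃ (n : ZMod p) (M : (Matrix (Fin 2) (Fin 2) (ZMod p))ˣ),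
      (M : Matrix (Fin 2) (Fin 2) (ZMod p)) = !![n, -κ; 1, n] ∧
      orderOf (QuotientGroup.mk
        (s := Subgroup.center (Matrix (Fin 2) (Fin 2) (ZMod p))ˣ) M) = p + 1 := by
  classical
  have hp : p.Prime := Fact.out
  -- the irreducible quadratic
  set q : (ZMod p)[X] := X ^ 2 - C (-κ) with hqdef
  have hirr : Irreducible q :=
    X_pow_sub_C_irreducible_of_prime Nat.prime_two (fun b hb => hres ⟨b, hb⟩)
  haveI := Fact.mk hirr
  have hmonic : q.Monic := Polynomial.monic_X_pow_sub_C _ (by norm_num)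
  have hq0 : q ≠ 0 := hmonic.ne_zero
  have hdeg : q.degree = 2 := by
    rw [hqdef]; exact_mod_cast Polynomial.degree_X_pow_sub_C (by norm_num : 0 < 2) (-κ)
  have hnatdeg : q.natDegree = 2 := by
    rw [hqdef]; exact Polynomial.natDegree_X_pow_sub_C
  have hAlg : algebraMap (ZMod p) (AdjoinRoot q) = AdjoinRoot.of q :=
    AdjoinRoot.algebraMap_eq q
  -- K is a finite field of cardinality p^2
  let pb : PowerBasis (ZMod p) (AdjoinRoot q) := AdjoinRoot.powerBasis hq0
  haveI : Fintype (AdjoinRoot q) := Module.fintypeOfFintype pb.basis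
  have hcardK : Fintype.card (AdjoinRoot q) = p ^ 2 := by
    rw [Module.card_eq_pow_finrank (K := ZMod p) (V := AdjoinRoot q), ZMod.card, pb.finrank,
      AdjoinRoot.powerBasis_dim, hnatdeg]
  have hcardKu : Nat.card (AdjoinRoot q)ˣ = p ^ 2 - 1 := by
    rw [Nat.card_eq_fintype_card, Fintype.card_units, hcardK]
  -- the subgroup of scalars
  let f : (ZMod p) →* AdjoinRoot q := (algebraMap (ZMod p) (AdjoinRoot q)).toMonoidHom
  have hfinj : Function.Injective f := (algebraMap (ZMod p) (AdjoinRoot q)).injective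
  set H : Subgroup (AdjoinRoot q)ˣ := (Units.map f).range with hHdef
  have memH : ∀ u : (AdjoinRoot q)ˣ,
      u ∈ H ↔ ∃ a : ZMod p, (u : AdjoinRoot q) = AdjoinRoot.of q a := by
    intro u
    constructor
    · rintro ⟨v, rfl⟩
      exact ⟨v, by rw [← hAlg]; rfl⟩
    · rintro ⟨a, ha⟩
      have ha0 : a ≠ 0 := by
        rintro rfl
        exact u.ne_zero (by rw [ha, map_zero])
      refine ⟨Units.mk0 a ha0, Units.ext ?_⟩
      show algebraMap (ZMod p) (AdjoinRoot q) a = (u : AdjoinRoot q)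
      rw [hAlg, ha]
  have hcardH : Nat.card H = p - 1 := by
    have h : Nat.card H = Nat.card (ZMod p)ˣ :=
      Nat.card_congr (MonoidHom.ofInjective (Units.map_injective hfinj)).toEquiv.symm
    rw [h, Nat.card_eq_fintype_card, ZMod.card_units]
  -- the quotient has order p + 1
  have hcardQ : Nat.card ((AdjoinRoot q)ˣ ⧸ H) = p + 1 := by
    have h1 : Nat.card (AdjoinRoot q)ˣ = Nat.card ((AdjoinRoot q)ˣ ⧸ H) * Nat.card H :=
      Subgroup.card_eq_card_quotient_mul_card_subgroup H
    rw [hcardKu, hcardH] at h1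
    have h2 : (p + 1) * (p - 1) = p ^ 2 - 1 := by
      simpa using (Nat.sq_sub_sq p 1).symm
    have hpos : 0 < p - 1 := by have := hp.two_le; omega
    exact (Nat.eq_of_mul_eq_mul_right hpos (h2.trans h1)).symm
  -- a generator of the quotient
  haveI : IsCyclic ((AdjoinRoot q)ˣ ⧸ H) :=
    isCyclic_of_surjective (QuotientGroup.mk' H) (QuotientGroup.mk'_surjective H)
  obtain ⟨g, hg⟩ := IsCyclic.exists_generator (α := (AdjoinRoot q)ˣ ⧸ H)
  have horder : orderOf g = p + 1 := by
    rw [orderOf_eq_card_of_forall_mem_zpowers hg, hcardQ]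
  obtain ⟨u, rfl⟩ := QuotientGroup.mk_surjective g
  obtain ⟨a, b, hab⟩ := adjoinRoot_repr hmonic hdeg (u : AdjoinRoot q)
  have hb : b ≠ 0 := by
    rintro rfl
    have hu : (u : (AdjoinRoot q)ˣ) ∈ H := (memH u).2 ⟨a, by rw [hab]; simp⟩
    have h1 : (QuotientGroup.mk u : (AdjoinRoot q)ˣ ⧸ H) = 1 :=
      (QuotientGroup.eq_one_iff u).2 hu
    rw [h1, orderOf_one] at horder
    have := hp.two_le
    omega
  -- normalize to get α = of n + root
  set n : ZMod p := b⁻¹ * a with hndef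
  let bu : (ZMod p)ˣ := Units.mk0 b hb
  let v : (AdjoinRoot q)ˣ := Units.map f bu
  have hvH : v ∈ H := ⟨bu, rfl⟩
  let αu : (AdjoinRoot q)ˣ := v⁻¹ * u
  have hv : (v : AdjoinRoot q) = AdjoinRoot.of q b := by rw [← hAlg]; rfl
  have hαu : (αu : AdjoinRoot q) = AdjoinRoot.of q n + AdjoinRoot.root q := by
    show ((v⁻¹ : (AdjoinRoot q)ˣ) : AdjoinRoot q) * (u : AdjoinRoot q) = _
    have hvinv : ((v⁻¹ : (AdjoinRoot q)ˣ) : AdjoinRoot q) = AdjoinRoot.of q b⁻¹ := by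
      rw [Units.val_inv_eq_inv_val, hv, ← hAlg, ← map_inv₀ (algebraMap (ZMod p) (AdjoinRoot q))]
    rw [hvinv, hab, mul_add, ← map_mul, ← mul_assoc, ← map_mul,
      inv_mul_cancel₀ hb, map_one, one_mul, hndef]
  have hv1 : (QuotientGroup.mk' H) v = 1 := (QuotientGroup.eq_one_iff v).2 hvH
  have hmkα : (QuotientGroup.mk αu : (AdjoinRoot q)ˣ ⧸ H) = QuotientGroup.mk u := by
    show ((QuotientGroup.mk' H) (v⁻¹ * u) : (AdjoinRoot q)ˣ ⧸ H) = QuotientGroup.mk' H u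
    rw [map_mul, map_inv, hv1]
    exact one_mul ((QuotientGroup.mk' H) u)
  have horderα : orderOf (QuotientGroup.mk (s := H) αu) = p + 1 := by
    rw [hmkα]; exact horder
  -- the matrix representation
  have haeval : aeval (!![0, -κ; 1, 0] : Matrix (Fin 2) (Fin 2) (ZMod p)) q = 0 := by
    rw [hqdef]
    simp only [map_sub, map_pow, aeval_X, aeval_C]
    rw [Algebra.algebraMap_eq_smul_one]
    ext i j
    fin_cases i <;> fin_cases j <;>
      simp [pow_two, Matrix.mul_apply, Fin.sum_univ_two, Matrix.one_apply]
  have Hzero : ∀ r ∈ Ideal.span {q},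
      (aeval (!![0, -κ; 1, 0] : Matrix (Fin 2) (Fin 2) (ZMod p))).toRingHom r = 0 := by
    intro r hr
    rw [Ideal.mem_span_singleton] at hr
    obtain ⟨s, rfl⟩ := hr
    simp [map_mul, haeval]
  let φ : AdjoinRoot q →+* Matrix (Fin 2) (Fin 2) (ZMod p) :=
    Ideal.Quotient.lift (Ideal.span {q})
      (aeval (!![0, -κ; 1, 0] : Matrix (Fin 2) (Fin 2) (ZMod p))).toRingHom Hzero
  have φmk : ∀ r : (ZMod p)[X],
      φ (AdjoinRoot.mk q r) = aeval (!![0, -κ; 1, 0] : Matrix (Fin 2) (Fin 2) (ZMod p)) r :=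
    fun r => rfl
  have φroot : φ (AdjoinRoot.root q) = !![0, -κ; 1, 0] := by simpa using φmk X
  have φof : ∀ a : ZMod p, φ (AdjoinRoot.of q a) = a • 1 := by
    intro a
    simpa [Algebra.algebraMap_eq_smul_one] using φmk (C a)
  have hφinj : Function.Injective φ := φ.injective
  let M : (Matrix (Fin 2) (Fin 2) (ZMod p))ˣ := Units.map φ.toMonoidHom αu
  have hMval : (M : Matrix (Fin 2) (Fin 2) (ZMod p)) = !![n, -κ; 1, n] := by
    show φ (αu : AdjoinRoot q) = _
    rw [hαu, map_add φ, φroot, φof]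
    ext i j
    fin_cases i <;> fin_cases j <;> simp [Matrix.one_apply]
  refine ⟨n, M, hMval, ?_⟩
  -- transfer the order
  have key : ∀ m : ℕ,
      (QuotientGroup.mk (s := Subgroup.center (Matrix (Fin 2) (Fin 2) (ZMod p))ˣ) M) ^ m = 1 ↔
      (QuotientGroup.mk (s := H) αu) ^ m = 1 := by
    intro m
    have hMm : ((M ^ m : (Matrix (Fin 2) (Fin 2) (ZMod p))ˣ) : Matrix (Fin 2) (Fin 2) (ZMod p))
        = φ ((αu : AdjoinRoot q) ^ m) := by
      rw [Units.val_pow_eq_pow_val, map_pow φ]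
      rfl
    constructor
    · intro hm
      rw [← QuotientGroup.mk'_apply, ← map_pow, QuotientGroup.mk'_apply,
        QuotientGroup.eq_one_iff] at hm
      -- M^m central ⇒ αu^m is a scalar
      obtain ⟨x, y, hxy⟩ := adjoinRoot_repr hmonic hdeg ((αu : AdjoinRoot q) ^ m)
      have hcomm := (Subgroup.mem_center_iff.1 hm) (Tu (ZMod p))
      have hmat : ((Tu (ZMod p) : (Matrix (Fin 2) (Fin 2) (ZMod p))ˣ)
            : Matrix (Fin 2) (Fin 2) (ZMod p)) * φ ((αu : AdjoinRoot q) ^ m)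
          = φ ((αu : AdjoinRoot q) ^ m)
            * ((Tu (ZMod p) : (Matrix (Fin 2) (Fin 2) (ZMod p))ˣ)
                : Matrix (Fin 2) (Fin 2) (ZMod p)) := by
        have h := congrArg (Units.val) hcomm
        rw [Units.val_mul, Units.val_mul, hMm] at h
        exact h
      have hA : φ ((αu : AdjoinRoot q) ^ m)
          = x • (1 : Matrix (Fin 2) (Fin 2) (ZMod p)) + y • !![0, -κ; 1, 0] := by
        rw [hxy, map_add φ, map_mul φ, φroot, φof, φof, smul_mul_assoc, one_mul]
      have hy : y = 0 := by
        have h00 := congrFun (congrFun hmat 0) 0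
        rw [hA] at h00
        simp [Tu, Matrix.mul_apply, Fin.sum_univ_two, Matrix.one_apply] at h00
        simpa using h00
      rw [← QuotientGroup.mk'_apply, ← map_pow, QuotientGroup.mk'_apply,
        QuotientGroup.eq_one_iff]
      refine (memH _).2 ⟨x, ?_⟩
      rw [Units.val_pow_eq_pow_val, hxy, hy]
      simp
    · intro hm
      rw [← QuotientGroup.mk'_apply, ← map_pow, QuotientGroup.mk'_apply,
        QuotientGroup.eq_one_iff] at hm
      obtain ⟨x, hx⟩ := (memH _).1 hm
      rw [← QuotientGroup.mk'_apply, ← map_pow, QuotientGroup.mk'_apply,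
        QuotientGroup.eq_one_iff]
      apply scalar_mem_center _ x
      rw [hMm, ← Units.val_pow_eq_pow_val, hx, φof]

  rw [orderOf_eq_orderOf_iff.2 key, horderα]
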